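/- Suppose α(q) = −(1/2)Λq with Λ constant, invertible and antisymmetric, the Runge–Kutta matrix A = (a_{ij}) is invertible, and the coefficients satisfy the symplecticity condition b_i a_{ij} + b_j a_{ji} = b_i b_j for all i,j = 1,…,s. Then the discrete Hamiltonian map of the associated variational Runge–Kutta integrator is symplectic on the primary constraint N = {(q,p) : p = −(1/2)Λq}: identifying N with ℝ^n via q, the one-step map Φ_h: q ↦ q̄ (defined for h small enough to be a well-defined differentiable map) satisfies DΦ_h(q)ᵀ Λ DΦ_h(q) = Λ, i.e., it preserves the symplectic form Ω_N whose coordinate matrix is Λ. -/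

import Mathlib

open Matrix

/-- The Jacobian matrix `(Df)_{μν} = ∂f_μ/∂q^ν` of a map `f : ℝ^n → ℝ^n`. -/
noncomputable def jac {n : ℕ} (f : (Fin n → ℝ) → (Fin n → ℝ)) (q : Fin n → ℝ) :
    Matrix (Fin n) (Fin n) ℝ :=
  fun μ ν => fderiv ℝ f q (Pi.single ν 1) μ

/-- The gradient `∇H` of a function `H : ℝ^n → ℝ`. -/
noncomputable def grad {n : ℕ} (H : (Fin n → ℝ) → ℝ) (q : Fin n → ℝ) : Fin n → ℝ :=
  fun μ => fderiv ℝ H q (Pi.single μ 1)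

lemma fderiv_eq_jac_mulVec {n : ℕ} (f : (Fin n → ℝ) → (Fin n → ℝ)) (q v : Fin n → ℝ) :
    fderiv ℝ f q v = jac f q *ᵥ v := by
  have hv : v = ∑ ν, v ν • (Pi.single ν 1 : Fin n → ℝ) := by
    funext k
    simp [Finset.sum_apply, Pi.single_apply]
  calc fderiv ℝ f q v = ∑ ν, v ν • fderiv ℝ f q (Pi.single ν 1) := by
        conv_lhs => rw [hv]
        simp [map_sum]
  _ = jac f q *ᵥ v := by
        funext μ
        simp [jac, mulVec, dotProduct, mul_comm, Finset.sum_apply]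

lemma jac_comp {n : ℕ} {f g : (Fin n → ℝ) → (Fin n → ℝ)} {q : Fin n → ℝ}
    (hg : DifferentiableAt ℝ g (f q)) (hf : DifferentiableAt ℝ f q) :
    jac (fun x => g (f x)) q = jac g (f q) * jac f q := by
  funext μ ν
  have hc : fderiv ℝ (fun x => g (f x)) q = (fderiv ℝ g (f q)).comp (fderiv ℝ f q) :=
    fderiv_comp q hg hf
  simp only [jac, hc, ContinuousLinearMap.comp_apply]
  rw [fderiv_eq_jac_mulVec, fderiv_eq_jac_mulVec, mulVec_mulVec, mulVec_single_one]
  simp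

lemma jac_matmul {n : ℕ} (Λ : Matrix (Fin n) (Fin n) ℝ) (f : (Fin n → ℝ) → (Fin n → ℝ))
    (q : Fin n → ℝ) (hf : DifferentiableAt ℝ f q) :
    jac (fun x => Λ *ᵥ f x) q = Λ * jac f q := by
  funext μ ν
  set L := LinearMap.toContinuousLinearMap Λ.mulVecLin with hL
  have hc : fderiv ℝ (fun x => Λ *ᵥ f x) q = L.comp (fderiv ℝ f q) := by
    have : (fun x => Λ *ᵥ f x) = fun x => L (f x) := by
      funext x; simp [hL]
    rw [this]
    exact (L.hasFDerivAt.comp q hf.hasFDerivAt).fderiv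
  simp only [jac, hc, ContinuousLinearMap.comp_apply]
  rw [fderiv_eq_jac_mulVec]
  simp only [hL, LinearMap.coe_toContinuousLinearMap', mulVecLin_apply, mulVec_mulVec,
    mulVec_single_one]
  rfl

lemma jac_affine {n s : ℕ} (c : Fin s → ℝ) (f : Fin s → (Fin n → ℝ) → (Fin n → ℝ))
    (h : ℝ) (q : Fin n → ℝ) (hf : ∀ j, DifferentiableAt ℝ (f j) q) :
    jac (fun x => x + h • ∑ j, c j • f j x) q = 1 + h • ∑ j, c j • jac (f j) q := by
  have h1 : DifferentiableAt ℝ (fun x => ∑ j, c j • f j x) q :=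
    DifferentiableAt.fun_sum fun j _ => (hf j).const_smul (c j)
  have h2 : fderiv ℝ (fun x => ∑ j, c j • f j x) q = ∑ j, c j • fderiv ℝ (f j) q := by
    rw [fderiv_fun_sum (A := fun j y => c j • f j y) fun j _ => (hf j).const_smul (c j)]
    congr 1
    funext j
    exact fderiv_fun_const_smul (hf j) (c j)
  have h3 : fderiv ℝ (fun x => x + h • ∑ j, c j • f j x) q
      = ContinuousLinearMap.id ℝ (Fin n → ℝ) + h • ∑ j, c j • fderiv ℝ (f j) q := by
    rw [fderiv_fun_add (g := fun y => h • ∑ j, c j • f j y) differentiableAt_fun_id (h1.const_smul h), fderiv_fun_id,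
      fderiv_fun_const_smul h1, h2]
  funext μ ν
  simp only [jac, h3, ContinuousLinearMap.add_apply, ContinuousLinearMap.id_apply,
    ContinuousLinearMap.smul_apply, ContinuousLinearMap.sum_apply, Matrix.add_apply,
    Matrix.smul_apply, Matrix.sum_apply, Pi.add_apply, Pi.smul_apply, Finset.sum_apply,
    smul_eq_mul, Matrix.one_apply, Pi.single_apply]

lemma grad_differentiable {n : ℕ} {H : (Fin n → ℝ) → ℝ} (hH : ContDiff ℝ (⊤ : ℕ∞) H) :
    Differentiable ℝ (grad H) := by
  have hf' : ContDiff ℝ (⊤ : ℕ∞) (fderiv ℝ H) := hH.fderiv_right (by exact_mod_cast le_top)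
  have : ∀ μ, Differentiable ℝ (fun x => fderiv ℝ H x (Pi.single μ 1)) := fun μ =>
    (hf'.differentiable (by simp)).clm_apply (differentiable_const _)
  exact differentiable_pi.mpr this

lemma hess_apply {n : ℕ} {H : (Fin n → ℝ) → ℝ} (hH : ContDiff ℝ (⊤ : ℕ∞) H)
    (y : Fin n → ℝ) (μ ν : Fin n) :
    jac (grad H) y μ ν = fderiv ℝ (fderiv ℝ H) y (Pi.single ν 1) (Pi.single μ 1) := by
  have hf' : ContDiff ℝ (⊤ : ℕ∞) (fderiv ℝ H) := hH.fderiv_right (by exact_mod_cast le_top)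
  have hd : ∀ i : Fin n, DifferentiableAt ℝ (fun x => fderiv ℝ H x (Pi.single i 1)) y := fun i =>
    ((hf'.differentiable (by simp)).clm_apply (differentiable_const _)) y
  have hgrad : grad H = fun x (i : Fin n) => fderiv ℝ H x (Pi.single i 1) := rfl
  simp only [jac, hgrad]
  rw [fderiv_pi hd]
  simp only [ContinuousLinearMap.pi_apply]
  rw [fderiv_clm_apply ((hf'.differentiable (by simp)) y)
    (differentiableAt_const _)]
  simp

lemma hess_symm {n : ℕ} {H : (Fin n → ℝ) → ℝ} (hH : ContDiff ℝ (⊤ : ℕ∞) H)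
    (y : Fin n → ℝ) : (jac (grad H) y)ᵀ = jac (grad H) y := by
  have hf' : ContDiff ℝ (⊤ : ℕ∞) (fderiv ℝ H) := hH.fderiv_right (by exact_mod_cast le_top)
  funext μ ν
  rw [transpose_apply, hess_apply hH, hess_apply hH]
  exact second_derivative_symmetric (f := H)
    (fun z => ((hH.differentiable (by simp)) z).hasFDerivAt)
    (((hf'.differentiable (by simp)) y).hasFDerivAt) _ _

lemma rk_algebra {n s : ℕ} (Λ : Matrix (Fin n) (Fin n) ℝ) (hΛanti : Λᵀ = -Λ)
    (A : Matrix (Fin s) (Fin s) ℝ) (b : Fin s → ℝ)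
    (hsymp : ∀ i j, b i * A i j + b j * A j i = b i * b j)
    (h : ℝ) (V X S : Fin s → Matrix (Fin n) (Fin n) ℝ)
    (J : Matrix (Fin n) (Fin n) ℝ)
    (hS : ∀ i, (S i)ᵀ = S i)
    (hE1 : ∀ i, Λ * V i = S i * X i)
    (hX : ∀ i, X i = 1 + h • ∑ j, A i j • V j)
    (hJ : J = 1 + h • ∑ j, b j • V j) :
    Jᵀ * Λ * J = Λ := by
  have hsym : ∀ i, ((X i)ᵀ * Λ * V i)ᵀ = (X i)ᵀ * Λ * V i := by
    intro i
    rw [mul_assoc, hE1 i]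
    simp [transpose_mul, hS i, mul_assoc]
  have hanti : ∀ i, (V i)ᵀ * Λ * X i = -((X i)ᵀ * Λ * V i) := by
    intro i
    have e1 : (V i)ᵀ * Λ * X i = ((X i)ᵀ * Λᵀ * V i)ᵀ := by
      simp [transpose_mul, mul_assoc]
    rw [e1, hΛanti]
    simp only [mul_neg, neg_mul, transpose_neg, hsym i]
  have hzero : ∀ i, (X i)ᵀ * Λ * V i + (V i)ᵀ * Λ * X i = 0 := by
    intro i; rw [hanti i]; simp
  set W : Fin s → Fin s → Matrix (Fin n) (Fin n) ℝ := fun i j => (V i)ᵀ * Λ * V j with hW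
  have hexp : ∀ i, (X i)ᵀ * Λ * V i + (V i)ᵀ * Λ * X i
      = (Λ * V i + (V i)ᵀ * Λ)
        + h • ∑ j, A i j • (W j i + W i j) := by
    intro i
    conv_lhs => rw [hX i]
    simp only [hW, transpose_add, transpose_one, transpose_smul, transpose_sum,
      Matrix.add_mul, Matrix.mul_add, Matrix.smul_mul, Matrix.mul_smul,
      Finset.sum_mul, Finset.mul_sum, Matrix.one_mul, Matrix.mul_one,
      smul_add, Finset.sum_add_distrib]
    abel
  have hkey : ∀ i, Λ * V i + (V i)ᵀ * Λ
      = -(h • ∑ j, A i j • (W j i + W i j)) := by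
    intro i
    have h0 := hzero i
    rw [hexp i] at h0
    exact eq_neg_of_add_eq_zero_left h0
  set U : Matrix (Fin n) (Fin n) ℝ := h • ∑ j, b j • V j with hU
  have e0 : Jᵀ * Λ * J = Λ + (Λ * U + Uᵀ * Λ) + Uᵀ * Λ * U := by
    rw [hJ]
    simp only [transpose_add, transpose_one, Matrix.add_mul, Matrix.mul_add,
      Matrix.one_mul, Matrix.mul_one]
    abel
  have e1 : Λ * U + Uᵀ * Λ = h • ∑ i, b i • (Λ * V i + (V i)ᵀ * Λ) := by
    simp only [hU, transpose_smul, transpose_sum, Matrix.mul_smul, Matrix.smul_mul,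
      Finset.mul_sum, Finset.sum_mul, smul_add, Finset.sum_add_distrib]
  have e2 : Uᵀ * Λ * U = ∑ i, ∑ j, (h * h * (b i * A i j + b j * A j i)) • W i j := by
    have : Uᵀ * Λ * U = ∑ i, ∑ j, (h * h * (b i * b j)) • W i j := by
      simp only [hU, hW, transpose_smul, transpose_sum, Matrix.smul_mul, Matrix.mul_smul,
        Finset.sum_mul, Finset.mul_sum, smul_smul, Finset.smul_sum]
      rw [Finset.sum_comm]
      apply Finset.sum_congr rfl
      intro i _
      apply Finset.sum_congr rfl
      intro j _
      rw [Matrix.mul_assoc]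
      module
    rw [this]
    exact Finset.sum_congr rfl fun i _ => Finset.sum_congr rfl fun j _ => by
      rw [hsymp i j]
  have e3 : h • ∑ i, b i • (Λ * V i + (V i)ᵀ * Λ)
      = -∑ i, ∑ j, (h * h * (b i * A i j)) • (W j i + W i j) := by
    calc h • ∑ i, b i • (Λ * V i + (V i)ᵀ * Λ)
        = h • ∑ i, b i • (-(h • ∑ j, A i j • (W j i + W i j))) := by
          congr 1
          exact Finset.sum_congr rfl fun i _ => by rw [hkey i]
      _ = -∑ i, ∑ j, (h * h * (b i * A i j)) • (W j i + W i j) := by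
          simp only [smul_neg, Finset.smul_sum, smul_smul, ← Finset.sum_neg_distrib]
          apply Finset.sum_congr rfl
          intro i _
          apply Finset.sum_congr rfl
          intro j _
          module
  have e4 : ∑ i, ∑ j, (h * h * (b i * A i j)) • (W j i + W i j)
      = ∑ i, ∑ j, (h * h * (b i * A i j + b j * A j i)) • W i j := by
    have swap : ∑ i, ∑ j, (h * h * (b i * A i j)) • W j i
        = ∑ i, ∑ j, (h * h * (b j * A j i)) • W i j := Finset.sum_comm
    calc ∑ i, ∑ j, (h * h * (b i * A i j)) • (W j i + W i j)
        = (∑ i, ∑ j, (h * h * (b i * A i j)) • W j i)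
          + ∑ i, ∑ j, (h * h * (b i * A i j)) • W i j := by
          simp [smul_add, Finset.sum_add_distrib]
      _ = (∑ i, ∑ j, (h * h * (b j * A j i)) • W i j)
          + ∑ i, ∑ j, (h * h * (b i * A i j)) • W i j := by rw [swap]
      _ = ∑ i, ∑ j, (h * h * (b i * A i j + b j * A j i)) • W i j := by
          simp only [← Finset.sum_add_distrib]
          exact Finset.sum_congr rfl fun i _ => Finset.sum_congr rfl fun j _ => by
            rw [← add_smul]; ring_nf
  rw [e0, e1, e2, e3, e4]
  abel

/-- For `α(q) = −(1/2)Λq` with `Λ` constant, invertible and antisymmetric, an invertible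
Runge–Kutta matrix `A`, and coefficients satisfying the symplecticity condition
`bᵢaᵢⱼ + bⱼaⱼᵢ = bᵢbⱼ`, the discrete Hamiltonian map of the associated variational
Runge–Kutta integrator is symplectic on the primary constraint `N ≅ ℝ^n`: the one-step
map `Φ_h : q ↦ q̄`, defined implicitly by `ΛQ̇ᵢ = ∇H(Qᵢ)`, `Qᵢ = q + hΣⱼaᵢⱼQ̇ⱼ`,
`q̄ = q + hΣⱼbⱼQ̇ⱼ`, satisfies `DΦ_h(q)ᵀ Λ DΦ_h(q) = Λ`. -/
theorem vrk_symplectic_on_primary_constraint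
    {n s : ℕ} (hn : Even n)
    (H : (Fin n → ℝ) → ℝ) (hH : ContDiff ℝ (⊤ : ℕ∞) H)
    (Λ : Matrix (Fin n) (Fin n) ℝ) (hΛinv : IsUnit Λ.det) (hΛanti : Λᵀ = -Λ)
    (A : Matrix (Fin s) (Fin s) ℝ) (b : Fin s → ℝ) (hA : IsUnit A.det)
    (hsymp : ∀ i j, b i * A i j + b j * A j i = b i * b j)
    (h : ℝ) (hh : 0 < h)
    (Qs Qd : (Fin n → ℝ) → Fin s → (Fin n → ℝ))
    (Φ : (Fin n → ℝ) → (Fin n → ℝ))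
    (hQsdiff : ∀ i, Differentiable ℝ (fun q => Qs q i))
    (hQddiff : ∀ i, Differentiable ℝ (fun q => Qd q i))
    (hΦdiff : Differentiable ℝ Φ)
    (heq1 : ∀ q i, Λ *ᵥ Qd q i = grad H (Qs q i))
    (heq2 : ∀ q i, Qs q i = q + h • ∑ j, A i j • Qd q j)
    (heq3 : ∀ q, Φ q = q + h • ∑ j, b j • Qd q j) :
    ∀ q : Fin n → ℝ, (jac Φ q)ᵀ * Λ * jac Φ q = Λ := by
  intro q
  set V : Fin s → Matrix (Fin n) (Fin n) ℝ := fun i => jac (fun x => Qd x i) q with hV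
  set X : Fin s → Matrix (Fin n) (Fin n) ℝ := fun i => jac (fun x => Qs x i) q with hXdef
  set S : Fin s → Matrix (Fin n) (Fin n) ℝ := fun i => jac (grad H) (Qs q i) with hSdef
  have hS : ∀ i, (S i)ᵀ = S i := fun i => hess_symm hH (Qs q i)
  have hE1 : ∀ i, Λ * V i = S i * X i := by
    intro i
    have hfun : (fun x => Λ *ᵥ Qd x i) = fun x => grad H (Qs x i) := by
      funext x; exact heq1 x i
    have lhs : jac (fun x => Λ *ᵥ Qd x i) q = Λ * V i :=
      jac_matmul Λ (fun x => Qd x i) q ((hQddiff i) q)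
    have rhs : jac (fun x => grad H (Qs x i)) q = S i * X i :=
      jac_comp ((grad_differentiable hH) (Qs q i)) ((hQsdiff i) q)
    rw [← lhs, hfun, rhs]
  have hX : ∀ i, X i = 1 + h • ∑ j, A i j • V j := by
    intro i
    have hfun : (fun x => Qs x i) = fun x => x + h • ∑ j, A i j • Qd x j := by
      funext x; exact heq2 x i
    have := jac_affine (A i) (fun j x => Qd x j) h q (fun j => (hQddiff j) q)
    rw [hXdef]
    simp only [hfun]
    exact this
  have hJ : jac Φ q = 1 + h • ∑ j, b j • V j := by
    have hfun : Φ = fun x => x + h • ∑ j, b j • Qd x j := by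
      funext x; exact heq3 x
    have := jac_affine b (fun j x => Qd x j) h q (fun j => (hQddiff j) q)
    rw [hfun]
    exact this
  exact rk_algebra Λ hΛanti A b hsymp h V X S (jac Φ q) hS hE1 hX hJ
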